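/- Let G be a δ-hyperbolic group and h ∈ G, R ≥ 0. Then there is a constant c depending only on δ such that the shadow S_1(h,R) in G is contained in the union over g in the ball B_{R+c}(h) of the cones cone(g), where cone(g) is the set of elements reachable by combing geodesics through g. -/

import Mathlib

/-- The word length of `g` with respect to the generating set `S`. -/
noncomputable def wordLength {G : Type*} [Group G] (S : Set G) (g : G) : ℕ :=
  sInf {n | ∃ l : List G, l.length = n ∧ (∀ x ∈ l, x ∈ S) ∧ l.prod = g}

/-- The Gromov product `(y,z)_x` in the word metric `d(g,h) = |g⁻¹h|_S`. -/
noncomputable def gp3 {G : Type*} [Group G] (S : Set G) (x y z : G) : ℝ :=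
  ((wordLength S (x⁻¹ * y) : ℝ) + (wordLength S (x⁻¹ * z) : ℝ)
    - (wordLength S (y⁻¹ * z) : ℝ)) / 2

/-- The shadow `S_1(h,R)` in `G` based at the identity: elements `z` with
`(h,z)_1 ≥ d(1,h) − R`. -/
noncomputable def groupShadow {G : Type*} [Group G] (S : Set G) (h : G) (R : ℝ) :
    Set G :=
  {z | (wordLength S h : ℝ) - R ≤ gp3 S 1 h z}

/-- Running the combing automaton from a state along a word. -/
def run {V G : Type*} (tr : V → G → Option V) : V → List G → Option V
  | v, [] => some v
  | v, a :: l => (tr v a).bind fun w => run tr w l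

/-- The cone of `g`: elements `h` reachable by combing geodesics through `g`, i.e.
the combing word of `h` has a prefix evaluating to `g`. -/
def cone {V G : Type*} (tr : V → G → Option V) (v0 : V) (S : Set G) [Monoid G]
    (g : G) : Set G :=
  {h | ∃ l₁ l₂ : List G, (∀ x ∈ l₁ ++ l₂, x ∈ S) ∧
        (run tr v0 (l₁ ++ l₂)).isSome ∧ l₁.prod = g ∧ (l₁ ++ l₂).prod = h}

namespace ShadowConesAux

variable {G : Type*} [Group G] {S : Set G}

lemma wl_le {g : G} {l : List G} (hl : ∀ x ∈ l, x ∈ S) (hp : l.prod = g) :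
    wordLength S g ≤ l.length :=
  Nat.sInf_le ⟨l, rfl, hl, hp⟩

lemma exists_wl_word (hgen : ∀ g : G, ∃ l : List G, (∀ x ∈ l, x ∈ S) ∧ l.prod = g)
    (g : G) :
    ∃ l : List G, l.length = wordLength S g ∧ (∀ x ∈ l, x ∈ S) ∧ l.prod = g := by
  have hne : {n | ∃ l : List G, l.length = n ∧ (∀ x ∈ l, x ∈ S) ∧ l.prod = g}.Nonempty := by
    obtain ⟨l, h1, h2⟩ := hgen g
    exact ⟨l.length, l, rfl, h1, h2⟩
  exact Nat.sInf_mem hne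

lemma wl_mul_le (hgen : ∀ g : G, ∃ l : List G, (∀ x ∈ l, x ∈ S) ∧ l.prod = g)
    (a b : G) :
    wordLength S (a * b) ≤ wordLength S a + wordLength S b := by
  obtain ⟨la, hla, ha, hpa⟩ := exists_wl_word hgen a
  obtain ⟨lb, hlb, hb, hpb⟩ := exists_wl_word hgen b
  have : wordLength S (a * b) ≤ (la ++ lb).length := by
    refine wl_le ?_ ?_
    · intro x hx
      rcases List.mem_append.1 hx with h | h
      exacts [ha x h, hb x h]
    · simp [hpa, hpb]
  simpa [hla, hlb] using this

lemma run_append {V : Type*} (tr : V → G → Option V) (v : V) (l₁ l₂ : List G) :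
    run tr v (l₁ ++ l₂) = (run tr v l₁).bind fun w => run tr w l₂ := by
  induction l₁ generalizing v with
  | nil => simp [run]
  | cons a l ih =>
    show run tr v (a :: (l ++ l₂)) = _
    cases htr : tr v a with
    | none => simp [run, htr]
    | some w => simp [run, htr, ih]

/-- Key prefix lemma: a length-`u` prefix of the combing word of `z` gives an
element `g` at distance `u` from `1` and `|z| - u` in front of `z`, whose cone
contains `z`. -/
lemma prefix_spec {V : Type*} (tr : V → G → Option V) (v0 : V)
    (hgen : ∀ g : G, ∃ l : List G, (∀ x ∈ l, x ∈ S) ∧ l.prod = g)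
    (hgeo : ∀ l : List G, (∀ x ∈ l, x ∈ S) → (run tr v0 l).isSome →
      wordLength S l.prod = l.length)
    {z : G} {l : List G} (hl : ∀ x ∈ l, x ∈ S) (hrun : (run tr v0 l).isSome)
    (hprod : l.prod = z) (u : ℕ) (hu : u ≤ l.length) :
    ∃ g : G, wordLength S g = u ∧ wordLength S (g⁻¹ * z) = l.length - u ∧
      z ∈ cone tr v0 S g := by
  set l₁ := l.take u with hl₁
  set l₂ := l.drop u with hl₂
  have hsplit : l₁ ++ l₂ = l := List.take_append_drop u l
  have hmem₁ : ∀ x ∈ l₁, x ∈ S := fun x hx => hl x (by rw [← hsplit]; exact List.mem_append_left _ hx)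
  have hmem₂ : ∀ x ∈ l₂, x ∈ S := fun x hx => hl x (by rw [← hsplit]; exact List.mem_append_right _ hx)
  set g := l₁.prod with hg
  have hlen₁ : l₁.length = u := by
    rw [hl₁, List.length_take]; omega
  have hlen₂ : l₂.length = l.length - u := by
    rw [hl₂, List.length_drop]
  have hprod₂ : l₂.prod = g⁻¹ * z := by
    have : g * l₂.prod = z := by
      rw [hg, ← List.prod_append, hsplit, hprod]
    rw [← this]; group
  have hwz : wordLength S z = l.length := by
    rw [← hprod]; exact hgeo l hl hrun
  have h1 : wordLength S g ≤ u := by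
    have := wl_le hmem₁ (rfl : l₁.prod = g)
    rw [hlen₁] at this
    exact this
  have h2 : wordLength S (g⁻¹ * z) ≤ l.length - u := by
    have := wl_le hmem₂ hprod₂
    rw [hlen₂] at this
    exact this
  have h3 : l.length ≤ wordLength S g + wordLength S (g⁻¹ * z) := by
    have := wl_mul_le hgen g (g⁻¹ * z)
    rw [show g * (g⁻¹ * z) = z by group, hwz] at this
    omega
  refine ⟨g, by omega, by omega, ?_⟩
  refine ⟨l₁, l₂, ?_, ?_, rfl, ?_⟩
  · rw [hsplit]; exact hl
  · rw [hsplit]; exact hrun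
  · rw [hsplit]; exact hprod

/-- Approximate symmetry of the word metric forced by hyperbolicity and
geodesic combing: `|w⁻¹| ≤ |w| + 4δ + 2`. -/
lemma wl_inv_le {V : Type*} (δ : ℝ) (hδ : 0 ≤ δ) (tr : V → G → Option V) (v0 : V)
    (hgen : ∀ g : G, ∃ l : List G, (∀ x ∈ l, x ∈ S) ∧ l.prod = g)
    (hhyp : ∀ x a b c' : G,
      min (gp3 S x a b) (gp3 S x b c') - δ ≤ gp3 S x a c')
    (hgeo : ∀ l : List G, (∀ x ∈ l, x ∈ S) → (run tr v0 l).isSome →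
      wordLength S l.prod = l.length)
    (hcomb : ∀ g : G, ∃! l : List G,
      (∀ x ∈ l, x ∈ S) ∧ (run tr v0 l).isSome ∧ l.prod = g)
    (w : G) :
    (wordLength S w⁻¹ : ℝ) ≤ (wordLength S w : ℝ) + (4 * δ + 2) := by
  obtain ⟨l, ⟨hl, hrun, hprod⟩, -⟩ := hcomb w⁻¹
  have hwl : wordLength S w⁻¹ = l.length := by rw [← hprod]; exact hgeo l hl hrun
  have hw0 : (0 : ℝ) ≤ (wordLength S w : ℝ) := by positivity
  by_cases hsmall : (l.length : ℝ) ≤ 2 * δ + 1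
  · rw [hwl]; linarith
  · push_neg at hsmall
    obtain ⟨K, hKgt, hKle⟩ : ∃ K : ℕ, 2 * δ < (K : ℝ) ∧ (K : ℝ) ≤ 2 * δ + 1 := by
      refine ⟨⌊2 * δ⌋₊ + 1, ?_, ?_⟩
      · have := Nat.lt_floor_add_one (2 * δ); push_cast; linarith
      · have := Nat.floor_le (by linarith : (0:ℝ) ≤ 2 * δ); push_cast; linarith
    have hKm : K ≤ l.length := by
      have : (K : ℝ) ≤ (l.length : ℝ) := by linarith
      exact_mod_cast this
    obtain ⟨g, hgu, hgz, -⟩ := prefix_spec tr v0 hgen hgeo hl hrun hprod K hKm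
    have honele : wordLength S (1 : G) = 0 :=
      Nat.eq_zero_of_le_zero
        (wl_le (S := S) (g := (1:G)) (l := []) (by simp) (by simp))
    -- real number facts
    have c1 : (wordLength S (g⁻¹ * w⁻¹) : ℝ) = (l.length : ℝ) - (K : ℝ) := by
      rw [hgz]; exact Nat.cast_sub hKm
    have hq : (0 : ℝ) ≤ (wordLength S g⁻¹ : ℝ) := by positivity
    have hmain := hhyp 1 g w⁻¹ 1
    have e1 : gp3 S 1 g w⁻¹ = ((K : ℝ) + (l.length : ℝ) - ((l.length : ℝ) - (K : ℝ))) / 2 := by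
      simp only [gp3, inv_one, one_mul]
      rw [hgu, hwl, c1]
    have e2 : gp3 S 1 w⁻¹ 1 = ((l.length : ℝ) + 0 - (wordLength S w : ℝ)) / 2 := by
      simp only [gp3, inv_one, one_mul, inv_inv, mul_one, honele]
      rw [hwl]
      norm_num
    have e3 : gp3 S 1 g 1 = ((K : ℝ) + 0 - (wordLength S g⁻¹ : ℝ)) / 2 := by
      simp only [gp3, inv_one, one_mul, mul_one, honele]
      rw [hgu]
      norm_num
    rw [e1, e2, e3] at hmain
    rw [hwl]
    rcases le_total (((K : ℝ) + (l.length : ℝ) - ((l.length : ℝ) - (K : ℝ))) / 2)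
        (((l.length : ℝ) + 0 - (wordLength S w : ℝ)) / 2) with hc | hc
    · rw [min_eq_left hc] at hmain
      linarith
    · rw [min_eq_right hc] at hmain
      linarith

end ShadowConesAux

open ShadowConesAux in
/-- for a δ-hyperbolic group with a geodesic combing, there is a
constant `c` depending only on δ such that any shadow `S_1(h,R)` is covered by the
cones of the elements of the ball `B_{R+c}(h)`. -/
theorem shadow_subset_union_cones (δ : ℝ) (hδ : 0 ≤ δ) :
    ∃ c : ℝ, 0 ≤ c ∧
      ∀ (G V : Type) [Group G] [Fintype V] (S : Finset G),
        (∀ g : G, ∃ l : List G, (∀ x ∈ l, x ∈ (S : Set G)) ∧ l.prod = g) →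
        (∀ x a b c' : G,
          min (gp3 (S : Set G) x a b) (gp3 (S : Set G) x b c') - δ ≤
            gp3 (S : Set G) x a c') →
        ∀ (v0 : V) (tr : V → G → Option V),
        (∀ l : List G, (∀ x ∈ l, x ∈ (S : Set G)) → (run tr v0 l).isSome →
          wordLength (S : Set G) l.prod = l.length) →
        (∀ g : G, ∃! l : List G,
          (∀ x ∈ l, x ∈ (S : Set G)) ∧ (run tr v0 l).isSome ∧ l.prod = g) →
        ∀ (h : G) (R : ℝ), 0 ≤ R →
          ∀ z ∈ groupShadow (S : Set G) h R,
            ∃ g : G, (wordLength (S : Set G) (h⁻¹ * g) : ℝ) ≤ R + c ∧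
              z ∈ cone tr v0 (S : Set G) g := by
  refine ⟨4 * δ + 2, by linarith, ?_⟩
  intro G V _ _ S hgen hhyp v0 tr hgeo hcomb h R hR z hz
  classical
  set Ss : Set G := (S : Set G)
  -- notation
  set A : ℝ := (wordLength Ss h⁻¹ : ℝ) with hA
  set E : ℝ := (wordLength Ss (h⁻¹ * z) : ℝ) with hE
  set nh : ℝ := (wordLength Ss h : ℝ) with hnh
  set n : ℝ := (wordLength Ss z : ℝ) with hn
  -- shadow condition : nh + E - n ≤ 2R
  have hshadow : nh + E - n ≤ 2 * R := by
    have hz' : nh - R ≤ gp3 Ss 1 h z := hz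
    have : gp3 Ss 1 h z = (nh + n - E) / 2 := by
      simp only [gp3, inv_one, one_mul]
      rfl
    rw [this] at hz'
    linarith
  -- symmetry : A ≤ nh + 4δ + 2
  have hsym : A ≤ nh + (4 * δ + 2) :=
    wl_inv_le δ hδ tr v0 hgen hhyp hgeo hcomb h
  -- E ≤ A + n
  have hEle : E ≤ A + n := by
    have := wl_mul_le hgen h⁻¹ z
    rw [hA, hE, hn]
    exact_mod_cast this
  -- combing word of z
  obtain ⟨l, ⟨hl, hrun, hprod⟩, -⟩ := hcomb z
  have hwz : wordLength Ss z = l.length := by rw [← hprod]; exact hgeo l hl hrun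
  set ustar : ℝ := (A + n - E) / 2 with hustar
  have hustar0 : 0 ≤ ustar := by rw [hustar]; linarith
  by_cases hcase : ustar ≤ n
  · -- take u = ⌊ustar⌋₊
    set u : ℕ := ⌊ustar⌋₊ with hu
    have hu1 : (u : ℝ) ≤ ustar := Nat.floor_le hustar0
    have hu2 : ustar < (u : ℝ) + 1 := Nat.lt_floor_add_one ustar
    have hun : u ≤ l.length := by
      have : (u : ℝ) ≤ (l.length : ℝ) := by
        rw [← hwz] at *
        have : (u:ℝ) ≤ n := le_trans hu1 hcase
        rw [hn, hwz] at this
        exact this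
      exact_mod_cast this
    obtain ⟨g, hgu, hgz, hcone⟩ := prefix_spec tr v0 hgen hgeo hl hrun hprod u hun
    refine ⟨g, ?_, hcone⟩
    set D : ℝ := (wordLength Ss (h⁻¹ * g) : ℝ) with hD
    have hcast : (wordLength Ss (g⁻¹ * z) : ℝ) = n - (u : ℝ) := by
      rw [hgz, hn, hwz]; exact Nat.cast_sub hun
    have hmain := hhyp h 1 g z
    have e1 : gp3 Ss h 1 g = (A + D - (u : ℝ)) / 2 := by
      simp only [gp3, inv_one, one_mul, mul_one]
      rw [hgu]
    have e2 : gp3 Ss h g z = (D + E - (n - (u : ℝ))) / 2 := by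
      simp only [gp3]
      rw [hcast]
    have e3 : gp3 Ss h 1 z = (A + E - n) / 2 := by
      simp only [gp3, inv_one, one_mul, mul_one]
      rfl
    rw [e1, e2, e3] at hmain
    rcases le_total ((A + D - (u : ℝ)) / 2) ((D + E - (n - (u : ℝ))) / 2) with hc | hc
    · rw [min_eq_left hc] at hmain
      -- D ≤ E - n + u + 2δ ≤ (A+E-n)/2 + 2δ
      have : D ≤ E - n + ustar + 2 * δ := by linarith
      rw [hustar] at this
      linarith
    · rw [min_eq_right hc] at hmain
      -- D ≤ A - u + 2δ ≤ (A+E-n)/2 + 1 + 2δ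
      have : D ≤ A - (ustar - 1) + 2 * δ := by linarith
      rw [hustar] at this
      linarith
  · -- n < ustar : take g = z
    push_neg at hcase
    refine ⟨z, ?_, ⟨l, [], by simpa using hl, by simpa using hrun, hprod,
      by simpa using hprod⟩⟩
    -- E < (A+E-n)/2 ≤ R + 2δ + 1
    have h1 : E < (A + E - n) / 2 := by
      rw [hustar] at hcase
      linarith
    rw [← hE]
    linarith
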